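/- Let W be a finite set and ob : 𝒫(W) → 𝒫(𝒫(W)) a function such that for every X ⊆ W: ob(X) ≠ ∅; every A ∈ ob(X) satisfies A ⊆ X; ob(X) is closed under binary intersections (condition (5-c)); and condition (5-d) holds: if Y ∈ ob(X), Y ⊆ X ⊆ Z, then (Z − X) ∪ Y ∈ ob(Z). Define μ(X) := ⋂ ob(X) (the intersection of all members of ob(X)). Then: (i) μ(X) ∈ ob(X) and is the smallest element of ob(X) under inclusion; (ii) μ satisfies (μ⊆): μ(X) ⊆ X; and (iii) μ satisfies (μPR): for all X ⊆ Z ⊆ W, μ(Z) ∩ X ⊆ μ(X). -/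

import Mathlib

lemma sInter_mem_of_closed {W : Type*} [Finite W] (S : Set (Set W))
    (hne : S.Nonempty) (hcl : ∀ A ∈ S, ∀ B ∈ S, A ∩ B ∈ S) : ⋂₀ S ∈ S := by
  have hfin : S.Finite := Set.toFinite S
  obtain ⟨m, hm, hmin⟩ := Set.Finite.exists_minimalFor id S hfin hne
  have hleast : ∀ A ∈ S, m ⊆ A := by
    intro A hA
    have h1 : m ∩ A ∈ S := hcl m hm A hA
    have h2 : id (m ∩ A) ≤ id m := Set.inter_subset_left
    have := hmin h1 h2
    intro x hx
    have : m = m ∩ A := subset_antisymm this Set.inter_subset_left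
    rw [this] at hx
    exact hx.2
  have : ⋂₀ S = m := by
    apply subset_antisymm
    · exact Set.sInter_subset_of_mem hm
    · exact Set.subset_sInter hleast
  rw [this]; exact hm

/-- For finite `W` and `ob` with nonempty values `ob X ⊆ 𝒫(X)` closed under binary
intersections and satisfying (5-d), the function `μ(X) := ⋂ ob(X)` is the smallest
element of `ob X`, and satisfies `(μ⊆)` and `(μPR)`. -/
theorem stmt_19 {W : Type*} [Finite W] (ob : Set W → Set (Set W))
    (hne : ∀ X : Set W, ob X ≠ ∅)
    (hsub : ∀ X : Set W, ∀ A ∈ ob X, A ⊆ X)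
    (hinter : ∀ X : Set W, ∀ A ∈ ob X, ∀ B ∈ ob X, A ∩ B ∈ ob X)
    (h5d : ∀ X Z : Set W, ∀ Y ∈ ob X, Y ⊆ X → X ⊆ Z → (Z \ X) ∪ Y ∈ ob Z) :
    (∀ X : Set W, ⋂₀ ob X ∈ ob X ∧ ∀ A ∈ ob X, ⋂₀ ob X ⊆ A) ∧
    (∀ X : Set W, ⋂₀ ob X ⊆ X) ∧
    (∀ X Z : Set W, X ⊆ Z → ⋂₀ ob Z ∩ X ⊆ ⋂₀ ob X) := by
  have hmem : ∀ X : Set W, ⋂₀ ob X ∈ ob X := fun X =>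
    sInter_mem_of_closed (ob X) (Set.nonempty_iff_ne_empty.2 (hne X)) (hinter X)
  refine ⟨fun X => ⟨hmem X, fun A hA => Set.sInter_subset_of_mem hA⟩,
    fun X => hsub X _ (hmem X), fun X Z hXZ => ?_⟩
  intro w hw
  rw [Set.mem_sInter]
  intro A hA
  have h1 : (Z \ X) ∪ A ∈ ob Z := h5d X Z A hA (hsub X A hA) hXZ
  have h2 : w ∈ (Z \ X) ∪ A := hw.1 _ h1
  rcases h2 with h | h
  · exact absurd hw.2 h.2
  · exact h
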